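/- For the matrix M, the first column of M^{-1} is the vector v, where v = 2(1,0,5,0,…,0,2m−1)^T if m is odd and v = −2(0,3,0,7,…,0,2m−1)^T if m is even; i.e., M v = e_0. -/

import Mathlib

open Matrix

/-- α_j = 1/(8j²−2). -/
noncomputable def alph (j : ℕ) : ℝ := 1 / (8 * (j : ℝ) ^ 2 - 2)

/-- The m×m tridiagonal matrix M with M₀₀ = 1/2, M_{j-1,j} = −α_j, M_{j,j-1} = α_j. -/
noncomputable def Mmat (m : ℕ) : Matrix (Fin m) (Fin m) ℝ :=
  Matrix.of fun i j =>
    if (i : ℕ) = 0 ∧ (j : ℕ) = 0 then 1 / 2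
    else if (i : ℕ) + 1 = (j : ℕ) then - alph (j : ℕ)
    else if (j : ℕ) + 1 = (i : ℕ) then alph (i : ℕ)
    else 0

/-- The m×m matrix N = e₀ e₀ᵀ. -/
noncomputable def Nmat (m : ℕ) : Matrix (Fin m) (Fin m) ℝ :=
  Matrix.of fun i j => if (i : ℕ) = 0 ∧ (j : ℕ) = 0 then 1 else 0

/-- The vector v: v_j = 2(2j+1) for even j (0 else) when m is odd;
    v_j = −2(2j+1) for odd j (0 else) when m is even. -/
noncomputable def vVec (m : ℕ) : Fin m → ℝ := fun j =>
  if Odd m then (if Even (j : ℕ) then 2 * (2 * (j : ℝ) + 1) else 0)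
  else (if Odd (j : ℕ) then -2 * (2 * (j : ℝ) + 1) else 0)

/-- The standard basis vector e₀. -/
noncomputable def e0vec (m : ℕ) : Fin m → ℝ := fun i => if (i : ℕ) = 0 then 1 else 0

/-- Nat-indexed matrix entries. -/
noncomputable def Ment (i j : ℕ) : ℝ :=
  if i = 0 ∧ j = 0 then 1 / 2
  else if i + 1 = j then - alph j
  else if j + 1 = i then alph i
  else 0

/-- Nat-indexed vector entries. -/
noncomputable def vval (m j : ℕ) : ℝ :=
  if Odd m then (if Even j then 2 * (2 * (j : ℝ) + 1) else 0)
  else (if Odd j then -2 * (2 * (j : ℝ) + 1) else 0)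

lemma alph_ne (i : ℕ) (hi : 1 ≤ i) : (8 * (i : ℝ) ^ 2 - 2) ≠ 0 := by
  have : (1:ℝ) ≤ (i:ℝ) := by exact_mod_cast hi
  nlinarith

lemma key (m i : ℕ) (hm : 1 ≤ m) (hi : i < m) :
    ∑ j ∈ Finset.range m, Ment i j * vval m j = if i = 0 then 1 else 0 := by
  rcases eq_or_ne i 0 with rfl | hi0
  · have hpt : ∀ j, Ment 0 j * vval m j =
        (if j = 0 then (1/2) * vval m 0 else 0) +
        (if j = 1 then (- alph 1) * vval m 1 else 0) := by
      intro j
      rcases eq_or_ne j 0 with rfl | h0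
      · simp [Ment]
      · rcases eq_or_ne j 1 with rfl | h1
        · simp [Ment]
        · have : ¬ (0 + 1 = j) := by omega
          have h2 : ¬ (j + 1 = 0) := by omega
          simp [Ment, h0, h1, this, h2]
    rw [Finset.sum_congr rfl (fun j _ => hpt j), Finset.sum_add_distrib,
      Finset.sum_ite_eq' (Finset.range m) 0, Finset.sum_ite_eq' (Finset.range m) 1]
    simp only [Finset.mem_range, if_pos rfl]
    rcases Nat.even_or_odd m with hme | hmo
    · have hnodd : ¬ Odd m := by simp [Nat.not_odd_iff_even.mpr hme]
      have hm2 : 1 < m := by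
        rcases hme with ⟨k, hk⟩; omega
      rw [if_pos hm2]
      simp only [vval, hnodd, if_neg hnodd]
      norm_num [alph]
    · simp only [vval, if_pos hmo]
      norm_num [alph]
      omega
  · have hi1 : 1 ≤ i := by omega
    have hpt : ∀ j, Ment i j * vval m j =
        (if j = i + 1 then (- alph (i+1)) * vval m (i+1) else 0) +
        (if j = i - 1 then alph i * vval m (i-1) else 0) := by
      intro j
      rcases eq_or_ne j (i+1) with rfl | h0
      · have h1 : ¬ (i + 1 = i - 1) := by omega
        have h2 : ¬ (i = 0 ∧ i + 1 = 0) := by omega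
        simp [Ment, h1, h2]
      · rcases eq_or_ne j (i-1) with rfl | h1
        · have h2 : ¬ (i = 0 ∧ i - 1 = 0) := by omega
          have h3 : ¬ (i + 1 = i - 1) := by omega
          have h4 : i - 1 + 1 = i := by omega
          simp [Ment, h2, h3, h4]
        · have h2 : ¬ (i = 0 ∧ j = 0) := by omega
          have h3 : ¬ (i + 1 = j) := by omega
          have h4 : ¬ (j + 1 = i) := by omega
          simp [Ment, h0, h1, h2, h3, h4]
    rw [Finset.sum_congr rfl (fun j _ => hpt j), Finset.sum_add_distrib,
      Finset.sum_ite_eq' (Finset.range m) (i+1), Finset.sum_ite_eq' (Finset.range m) (i-1)]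
    have him : i - 1 ∈ Finset.range m := by simp; omega
    rw [if_pos him, if_neg hi0]
    simp only [Finset.mem_range]
    rcases Nat.even_or_odd m with hme | hmo
    · have hnodd : ¬ Odd m := by simp [Nat.not_odd_iff_even.mpr hme]
      rcases Nat.even_or_odd i with hie | hio
      · -- i even ≥ 2, m even: nonzero terms
        have hi2 : 2 ≤ i := by rcases hie with ⟨k,hk⟩; omega
        have hlt : i + 1 < m := by
          rcases hie with ⟨k,hk⟩; rcases hme with ⟨l,hl⟩; omega
        have ho1 : Odd (i+1) := by rcases hie with ⟨k,hk⟩; exact ⟨k, by omega⟩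
        have ho2 : Odd (i-1) := by rcases hie with ⟨k,hk⟩; exact ⟨k-1, by omega⟩
        rw [if_pos hlt]
        simp only [vval, if_neg hnodd, if_pos ho1, if_pos ho2]
        have hc : ((i - 1 : ℕ) : ℝ) = (i : ℝ) - 1 := by
          rw [Nat.cast_sub hi1]; norm_num
        rw [hc]
        push_cast
        rw [alph, alph]
        push_cast
        have d1 := alph_ne i hi1
        have d2 := alph_ne (i+1) (by omega)
        push_cast at d2
        field_simp
        ring
      · -- i odd, m even: both vals zero
        have h1 : ¬ Odd (i+1) := by rcases hio with ⟨k,hk⟩; simp [Nat.odd_iff]; omega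
        have h2 : ¬ Odd (i-1) := by rcases hio with ⟨k,hk⟩; simp [Nat.odd_iff]; omega
        simp [vval, hnodd, h1, h2]
    · rcases Nat.even_or_odd i with hie | hio
      · -- i even, m odd: both vals zero (i±1 odd)
        have h1 : ¬ Even (i+1) := by rcases hie with ⟨k,hk⟩; simp [Nat.even_iff]; omega
        have h2 : ¬ Even (i-1) := by rcases hie with ⟨k,hk⟩; simp [Nat.even_iff]; omega
        simp [vval, hmo, h1, h2]
      · -- i odd, m odd
        have hlt : i + 1 < m := by
          rcases hio with ⟨k,hk⟩; rcases hmo with ⟨l,hl⟩; omega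
        have he1 : Even (i+1) := by rcases hio with ⟨k,hk⟩; exact ⟨k+1, by omega⟩
        have he2 : Even (i-1) := by rcases hio with ⟨k,hk⟩; exact ⟨k, by omega⟩
        rw [if_pos hlt]
        simp only [vval, if_pos hmo, if_pos he1, if_pos he2]
        have hc : ((i - 1 : ℕ) : ℝ) = (i : ℝ) - 1 := by
          rw [Nat.cast_sub hi1]; norm_num
        rw [hc]
        push_cast
        rw [alph, alph]
        push_cast
        have d1 := alph_ne i hi1
        have d2 := alph_ne (i+1) (by omega)
        push_cast at d2
        field_simp
        ring

/-- M v = e₀, i.e. v is the first column of M⁻¹. -/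
theorem Mmat_mulVec_vVec (m : ℕ) (hm : 1 ≤ m) :
    (Mmat m).mulVec (vVec m) = e0vec m := by
  funext i
  have : (Mmat m).mulVec (vVec m) i = ∑ j : Fin m, Ment (i : ℕ) (j : ℕ) * vval m (j : ℕ) := by
    rfl
  rw [this, Fin.sum_univ_eq_sum_range (fun j => Ment (i : ℕ) j * vval m j) m,
    key m i hm i.isLt]
  rfl
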